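/- Let D be a triangulated category with a bounded t-structure, d ≥ 1, and Y a full subcategory of D^{[-d+1,0]}. Then ^{⊥_{≤0}}Y := {Z ∈ D^{[-d+1,0]} : Hom(Z, Y[j]) = 0 for all Y ∈ Y, j ≤ 0} is a positive torsion class: it is a torsion class in D^{[-d+1,0]} and is closed under d-factors (equivalently, Hom(T, F[j]) = 0 for all j ≤ 0 where F = T^⊥). -/

import Mathlib

open CategoryTheory Category Limits Pretriangulated Triangulated

universe v u

variable {C : Type u} [Category.{v} C] [Preadditive C] [HasZeroObject C] [HasShift C ℤ]
  [∀ (n : ℤ), (shiftFunctor C n).Additive] [Pretriangulated C]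

/-- The t-structure `t` is bounded. -/
def IsBoundedTStr (t : TStructure C) : Prop :=
  ∀ X : C, ∃ a b : ℤ, t.ge a X ∧ t.le b X

/-- The `d`-extended heart `D^{[-d+1,0]}` of the t-structure `t`, as a set of objects. -/
def extHeart (t : TStructure C) (d : ℕ) : Set C :=
  fun X => t.le 0 X ∧ t.ge (1 - (d : ℤ)) X

/-- A set of objects closed under isomorphisms. -/
def IsoClosed (S : Set C) : Prop := ∀ ⦃X Y : C⦄, (X ≅ Y) → X ∈ S → Y ∈ S

/-- `Z ∈ D^{[-d+1,0]}` is a `d`-factor of `𝒳`: there are `d` distinguished triangles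
`Z_i → X_i → Z_{i-1} → Z_i[1]` (`1 ≤ i ≤ d`) with `Z_0 = Z`, `Z_i ∈ D^{[-d+1,0]}` and
`X_i ∈ 𝒳`. -/
def IsDFactor (t : TStructure C) (d : ℕ) (𝒳 : Set C) (Z : C) : Prop :=
  Z ∈ extHeart t d ∧
  ∃ (Zc : ℕ → C) (Xc : ℕ → C), Zc 0 = Z ∧
    ∀ i : ℕ, 1 ≤ i → i ≤ d →
      Zc i ∈ extHeart t d ∧ Xc i ∈ 𝒳 ∧
      ∃ (f : Zc i ⟶ Xc i) (g : Xc i ⟶ Zc (i - 1)) (h : Zc (i - 1) ⟶ (Zc i)⟦(1 : ℤ)⟧),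
        Triangle.mk f g h ∈ (distTriang C)

/-- `Fac_d(𝒳)`, the set of `d`-factors of `𝒳`. -/
def facd (t : TStructure C) (d : ℕ) (𝒳 : Set C) : Set C := fun Z => IsDFactor t d 𝒳 Z

/-- `𝒳` is closed under `d`-factors. -/
def ClosedUnderDFactors (t : TStructure C) (d : ℕ) (𝒳 : Set C) : Prop :=
  ∀ Z : C, IsDFactor t d 𝒳 Z → Z ∈ 𝒳

/-- `S` is closed under extensions: the middle term of any distinguished triangle whose
outer terms lie in `S` lies in `S`. -/
def ExtClosed (S : Set C) : Prop :=
  ∀ ⦃X Y Z : C⦄ (f : X ⟶ Y) (g : Y ⟶ Z) (h : Z ⟶ X⟦(1 : ℤ)⟧),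
    Triangle.mk f g h ∈ (distTriang C) → X ∈ S → Z ∈ S → Y ∈ S

/-- `𝒳 ⊆ D^{[-d+1,0]}` is `d`-FAE closed: closed under isomorphisms, `d`-factors and
extensions. -/
def IsDFAEClosed (t : TStructure C) (d : ℕ) (𝒳 : Set C) : Prop :=
  𝒳 ⊆ extHeart t d ∧ IsoClosed 𝒳 ∧ ClosedUnderDFactors t d 𝒳 ∧ ExtClosed 𝒳

/-- `A * B`: the set of objects `Z` fitting in a distinguished triangle `X → Z → Y → X[1]`
with `X ∈ A` and `Y ∈ B`. -/
def star (A B : Set C) : Set C := fun Z =>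
  ∃ (X : C) (_ : X ∈ A) (Y : C) (_ : Y ∈ B) (f : X ⟶ Z) (g : Z ⟶ Y) (h : Y ⟶ X⟦(1 : ℤ)⟧),
    Triangle.mk f g h ∈ (distTriang C)

/-- A suspended subcategory: closed under isomorphisms, extensions and positive shifts. -/
def Suspended (S : Set C) : Prop :=
  IsoClosed S ∧ ExtClosed S ∧ ∀ X ∈ S, X⟦(1 : ℤ)⟧ ∈ S

/-- The aisle `D^{≤ n}` as a set. -/
def aisle (t : TStructure C) (n : ℤ) : Set C := fun X => t.le n X

/-- The coaisle `D^{≥ n}` as a set. -/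
def coaisle (t : TStructure C) (n : ℤ) : Set C := fun X => t.ge n X

/-- The right Hom-orthogonal `S^⊥` inside the extended heart. -/
def rPerp (t : TStructure C) (d : ℕ) (S : Set C) : Set C :=
  fun Z => Z ∈ extHeart t d ∧ ∀ Y ∈ S, ∀ f : Y ⟶ Z, f = 0

/-- The left Hom-orthogonal `^⊥S` inside the extended heart. -/
def lPerp (t : TStructure C) (d : ℕ) (S : Set C) : Set C :=
  fun Z => Z ∈ extHeart t d ∧ ∀ Y ∈ S, ∀ f : Z ⟶ Y, f = 0

/-- `S^{⊥_{≤0}} = {Z ∈ D^{[-d+1,0]} : Hom(S, Z[j]) = 0 for all j ≤ 0}`. -/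
def rPerpLe0 (t : TStructure C) (d : ℕ) (S : Set C) : Set C :=
  fun Z => Z ∈ extHeart t d ∧ ∀ Y ∈ S, ∀ j : ℤ, j ≤ 0 → ∀ f : Y ⟶ Z⟦j⟧, f = 0

/-- `^{⊥_{≤0}}S = {Z ∈ D^{[-d+1,0]} : Hom(Z, S[j]) = 0 for all j ≤ 0}`. -/
def lPerpLe0 (t : TStructure C) (d : ℕ) (S : Set C) : Set C :=
  fun Z => Z ∈ extHeart t d ∧ ∀ Y ∈ S, ∀ j : ℤ, j ≤ 0 → ∀ f : Z ⟶ Y⟦j⟧, f = 0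

/-- `(T, F)` is a torsion pair in the extended heart. -/
def IsTorsionPair (t : TStructure C) (d : ℕ) (T F : Set C) : Prop :=
  T ⊆ extHeart t d ∧ F ⊆ extHeart t d ∧ T = lPerp t d F ∧ F = rPerp t d T

/-- `(T, F)` is a positive torsion pair: a torsion pair with `Hom(T, F[j]) = 0` for all
`j ≤ 0`. -/
def IsPositiveTorsionPair (t : TStructure C) (d : ℕ) (T F : Set C) : Prop :=
  IsTorsionPair t d T F ∧
  ∀ X ∈ T, ∀ Y ∈ F, ∀ j : ℤ, j ≤ 0 → ∀ f : X ⟶ Y⟦j⟧, f = 0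

/-- `(T, F)` is an `s`-torsion pair in the extended heart: `D^{[-d+1,0]} = T * F`,
`Hom(T, F) = 0` and `Hom(T, F[-1]) = 0`. -/
def IsSTorsionPair (t : TStructure C) (d : ℕ) (T F : Set C) : Prop :=
  T ⊆ extHeart t d ∧ F ⊆ extHeart t d ∧
  (∀ Z ∈ extHeart t d,
    ∃ (X : C) (_ : X ∈ T) (Y : C) (_ : Y ∈ F) (f : X ⟶ Z) (g : Z ⟶ Y)
      (h : Y ⟶ X⟦(1 : ℤ)⟧), Triangle.mk f g h ∈ (distTriang C)) ∧
  (∀ X ∈ T, ∀ Y ∈ F, ∀ f : X ⟶ Y, f = 0) ∧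
  (∀ X ∈ T, ∀ Y ∈ F, ∀ f : X ⟶ Y⟦(-1 : ℤ)⟧, f = 0)

/-- A semibrick in the `d`-extended heart. -/
def IsSemibrick (t : TStructure C) (d : ℕ) (S : Set C) : Prop :=
  S ⊆ extHeart t d ∧
  (∀ X ∈ S, ¬ IsZero X ∧ ∀ f : X ⟶ X, f ≠ 0 → IsIso f) ∧
  (∀ X ∈ S, ∀ Y ∈ S, ∀ i : ℤ, i < 0 → ∀ f : X ⟶ Y⟦i⟧, f = 0) ∧
  (∀ X ∈ S, ∀ Y ∈ S, IsEmpty (X ≅ Y) → ∀ f : X ⟶ Y, f = 0)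

/-- The simple objects of an extension-closed subcategory `W` (whose conflations are the
distinguished triangles with all three terms in `W`): nonzero objects admitting no
conflation `L ↣ X ↠ M` in `W` with both `L` and `M` nonzero. -/
def simOf (W : Set C) : Set C := fun X =>
  X ∈ W ∧ ¬ IsZero X ∧
  ∀ ⦃L M : C⦄ (f : L ⟶ X) (g : X ⟶ M) (h : M ⟶ L⟦(1 : ℤ)⟧),
    Triangle.mk f g h ∈ (distTriang C) → L ∈ W → M ∈ W → IsZero L ∨ IsZero M

/-- `FiltMem S X`: the object `X` admits a finite filtration with subquotients in `S`. -/
inductive FiltMem (S : Set C) : C → Prop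
  | zero (X : C) : IsZero X → FiltMem S X
  | step (Y X Sm : C) (f : Y ⟶ X) (g : X ⟶ Sm) (h : Sm ⟶ Y⟦(1 : ℤ)⟧) :
      Triangle.mk f g h ∈ (distTriang C) → FiltMem S Y → Sm ∈ S → FiltMem S X

/-- `ExtClosureMem S X`: membership in the extension closure of `S` (the smallest
subcategory containing `S` and the zero objects, closed under isomorphisms and
extensions). -/
inductive ExtClosureMem (S : Set C) : C → Prop
  | of (X : C) : X ∈ S → ExtClosureMem S X
  | zero (X : C) : IsZero X → ExtClosureMem S X
  | iso (X Y : C) : (X ≅ Y) → ExtClosureMem S X → ExtClosureMem S Y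
  | ext (X Y Z : C) (f : X ⟶ Y) (g : Y ⟶ Z) (h : Z ⟶ X⟦(1 : ℤ)⟧) :
      Triangle.mk f g h ∈ (distTriang C) → ExtClosureMem S X → ExtClosureMem S Z →
      ExtClosureMem S Y

/-- A wide subcategory of the `d`-extended heart: closed under isomorphisms and
extensions, with `Hom(W, W[i]) = 0` for `i < 0`, and such that the restricted
extriangulated structure is abelian, i.e., there is an abelian structure on the
corresponding full subcategory whose short exact sequences (kernel-cokernel pairs) are
exactly the distinguished triangles with all three terms in `W`. -/
def IsWide (t : TStructure C) (d : ℕ) (W : Set C) : Prop :=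
  W ⊆ extHeart t d ∧ IsoClosed W ∧ ExtClosed W ∧
  (∀ X ∈ W, ∀ Y ∈ W, ∀ i : ℤ, i < 0 → ∀ f : X ⟶ Y⟦i⟧, f = 0) ∧
  ∃ _ : Abelian (ObjectProperty.FullSubcategory fun X => X ∈ W),
    ∀ (X Y Z : ObjectProperty.FullSubcategory fun X => X ∈ W) (f : X ⟶ Y) (g : Y ⟶ Z),
      ((f ≫ g = 0) ∧
        (∀ (V : ObjectProperty.FullSubcategory fun X => X ∈ W) (k : V ⟶ Y), k ≫ g = 0 →
          ∃! l : V ⟶ X, l ≫ f = k) ∧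
        (∀ (V : ObjectProperty.FullSubcategory fun X => X ∈ W) (k : Y ⟶ V), f ≫ k = 0 →
          ∃! l : Z ⟶ V, g ≫ l = k))
      ↔ ∃ h : Z.obj ⟶ X.obj⟦(1 : ℤ)⟧,
          Triangle.mk (show X.obj ⟶ Y.obj from f.hom) (show Y.obj ⟶ Z.obj from g.hom) h ∈
            (distTriang C)

/-- A finite-length wide subcategory: a wide subcategory in which every object has a
finite filtration with simple subquotients. -/
def IsFiniteLengthWide (t : TStructure C) (d : ℕ) (W : Set C) : Prop :=
  IsWide t d W ∧ ∀ X ∈ W, FiltMem (simOf W) X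

/-- The shift `S[n]` of a set of objects. -/
def shiftSet (S : Set C) (n : ℤ) : Set C := fun X => X⟦-n⟧ ∈ S

/-- The exact heart `H_T = (D^{≤ -d} * T) ∩ (T^⊥[1] * D^{≥ 0})` of a `d`-FAE closed
subcategory `T`. -/
def heartOf (t : TStructure C) (d : ℕ) (T : Set C) : Set C :=
  star (aisle t (-(d : ℤ))) T ∩ star (shiftSet (rPerp t d T) 1) (coaisle t 0)

/-- `phiClosure t d S`: the smallest `d`-FAE closed subcategory of the extended heart
containing `S`. -/
def phiClosure (t : TStructure C) (d : ℕ) (S : Set C) : Set C :=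
  fun X => ∀ U : Set C, IsDFAEClosed t d U → S ⊆ U → X ∈ U

lemma tzero (t : TStructure C) {X Y : C} {a b : ℤ} (hab : a < b)
    (hX : t.le a X) (hY : t.ge b Y) (f : X ⟶ Y) : f = 0 := by
  have h1 : t.le 0 (X⟦a⟧) := t.le_shift a a 0 (by omega) X hX
  have h2 : t.ge 1 (Y⟦a⟧) := t.ge_antitone (by omega : (1:ℤ) ≤ b - a) _
    (t.ge_shift b a (b - a) (by omega) Y hY)
  have hz := t.zero' ((shiftFunctor C a).map f) h1 h2
  apply (shiftFunctor C a).map_injective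
  rw [Functor.map_zero]
  exact hz

lemma shift_hom_zero {X Y : C} (P : ℤ → Prop)
    (h : ∀ m : ℤ, P m → ∀ g : X ⟶ Y⟦m⟧, g = 0) {a b : ℤ} (hab : P (b - a))
    (f : X⟦a⟧ ⟶ Y⟦b⟧) : f = 0 := by
  apply (shiftFunctor C (-a)).map_injective
  rw [Functor.map_zero]
  have hz := h (b - a) hab
    ((shiftFunctorCompIsoId C a (-a) (by omega)).inv.app X ≫ (shiftFunctor C (-a)).map f ≫
      (shiftFunctorAdd' C b (-a) (b - a) (by omega)).inv.app Y)
  have h2 := congrArg (fun q => (shiftFunctorCompIsoId C a (-a) (by omega)).hom.app X ≫ q ≫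
      (shiftFunctorAdd' C b (-a) (b - a) (by omega)).hom.app Y) hz
  simpa using h2

lemma le_ext (t : TStructure C) (T : Triangle C) (hT : T ∈ distTriang C) (n : ℤ)
    (h1 : t.le n T.obj₁) (h3 : t.le n T.obj₃) : t.le n T.obj₂ := by
  have hvan : ∀ (W : C), t.ge (n+1) W → ∀ f : T.obj₂ ⟶ W, f = 0 := by
    intro W hW f
    obtain ⟨g, hg⟩ := Triangle.yoneda_exact₂ T hT f (tzero t (by omega) h1 hW _)
    rw [hg, tzero t (by omega : n < n+1) h3 hW g, comp_zero]
  obtain ⟨A, B, hA, hB, u, v, w, hTri⟩ := t.exists_triangle T.obj₂ n (n+1) rfl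
  obtain ⟨g, hg⟩ := Triangle.yoneda_exact₃ _ hTri (𝟙 B)
    (by rw [show (Triangle.mk u v w).mor₂ = v from rfl, hvan B hB v]; exact zero_comp)
  have hBzero : IsZero B := by
    rw [IsZero.iff_id_eq_zero, hg,
      tzero t (by omega : n - 1 < n + 1) (t.le_shift n 1 (n-1) (by omega) A hA) hB g]; exact comp_zero
  have : IsIso u := (Triangle.isZero₃_iff_isIso₁ _ hTri).1 hBzero
  exact ((t.le n).prop_iff_of_iso (asIso u)).1 hA

lemma ge_ext (t : TStructure C) (T : Triangle C) (hT : T ∈ distTriang C) (n : ℤ)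
    (h1 : t.ge n T.obj₁) (h3 : t.ge n T.obj₃) : t.ge n T.obj₂ := by
  have hvan : ∀ (W : C), t.le (n-1) W → ∀ f : W ⟶ T.obj₂, f = 0 := by
    intro W hW f
    obtain ⟨g, hg⟩ := Triangle.coyoneda_exact₂ T hT f (tzero t (by omega) hW h3 _)
    rw [hg, tzero t (by omega : n-1 < n) hW h1 g, zero_comp]
  obtain ⟨A, B, hA, hB, u, v, w, hTri⟩ := t.exists_triangle T.obj₂ (n-1) n (by omega)
  obtain ⟨g, hg⟩ := Triangle.coyoneda_exact₂ _ (inv_rot_of_distTriang _ hTri) (𝟙 A)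
    (by rw [show (Triangle.mk u v w).invRotate.mor₂ = u from rfl, hvan A hA u]; exact comp_zero)
  have hAzero : IsZero A := by
    rw [IsZero.iff_id_eq_zero, hg,
      tzero t (by omega : n - 1 < n + 1) hA (t.ge_shift n (-1) (n+1) (by omega) B hB) g]; exact zero_comp
  have : IsIso v := (Triangle.isZero₁_iff_isIso₂ _ hTri).1 hAzero
  exact ((t.ge n).prop_iff_of_iso (asIso v)).2 hB

lemma lperp_subset (t : TStructure C) (d : ℕ) (𝒴 : Set C) (h𝒴 : 𝒴 ⊆ extHeart t d) :
    lPerp t d (rPerp t d (lPerpLe0 t d 𝒴)) ⊆ lPerpLe0 t d 𝒴 := by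
  rintro Z ⟨hZh, hZo⟩
  refine ⟨hZh, fun Y hY j hj f => ?_⟩
  obtain ⟨A, B, hA, hB, u, v, w, hTri⟩ := t.exists_triangle (Y⟦j⟧) 0 1 rfl
  have hYge : t.ge (1 - (d:ℤ)) (Y⟦j⟧) :=
    t.ge_antitone (by omega : (1:ℤ) - d ≤ 1 - d - j) _
      (t.ge_shift (1 - (d:ℤ)) j (1 - d - j) (by omega) Y (h𝒴 hY).2)
  have hBneg : t.ge 2 (B⟦(-1:ℤ)⟧) := t.ge_shift 1 (-1) 2 (by omega) B hB
  have hAge : t.ge (1 - (d:ℤ)) A := by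
    have := ge_ext t _ (inv_rot_of_distTriang _ hTri) (1 - (d:ℤ))
      (t.ge_antitone (by omega : (1:ℤ) - d ≤ 2) _ hBneg) hYge
    exact this
  have hAF : A ∈ rPerp t d (lPerpLe0 t d 𝒴) := by
    refine ⟨⟨hA, hAge⟩, fun X hX g => ?_⟩
    obtain ⟨e, he⟩ := Triangle.coyoneda_exact₂ _ (inv_rot_of_distTriang _ hTri) g
      (by rw [show (Triangle.mk u v w).invRotate.mor₂ = u from rfl]
          exact hX.2 Y hY j hj (g ≫ u))
    rw [he, tzero t (by omega : (0:ℤ) < 2) hX.1.1 hBneg e]; exact zero_comp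
  obtain ⟨g, hg⟩ := Triangle.coyoneda_exact₂ _ hTri f
    (by rw [show (Triangle.mk u v w).mor₂ = v from rfl]
        exact tzero t (by omega : (0:ℤ) < 1) hZh.1 hB (f ≫ v))
  rw [hg, hZo A hAF g]; exact zero_comp

lemma pos_vanish (t : TStructure C) (d : ℕ) (𝒴 : Set C) (h𝒴 : 𝒴 ⊆ extHeart t d) :
    ∀ (n : ℕ) (j : ℤ), -(n:ℤ) ≤ j → j ≤ 0 →
      ∀ X ∈ lPerpLe0 t d 𝒴, ∀ Y ∈ rPerp t d (lPerpLe0 t d 𝒴), ∀ f : X ⟶ Y⟦j⟧, f = 0 := by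
  intro n
  induction n with
  | zero =>
    intro j h1 h2 X hX Y hY f
    obtain rfl : j = 0 := by omega
    have hg : f ≫ (shiftFunctorZero C ℤ).hom.app Y = 0 :=
      hY.2 X hX (f ≫ (shiftFunctorZero C ℤ).hom.app Y)
    have : f = (f ≫ (shiftFunctorZero C ℤ).hom.app Y) ≫ (shiftFunctorZero C ℤ).inv.app Y := by
      simp
    rw [this, hg, zero_comp]
  | succ n ih =>
    intro j h1 h2 X hX Y hY f
    by_cases hj : -(n:ℤ) ≤ j
    · exact ih j hj h2 X hX Y hY f
    have hj1 : j ≤ -1 := by omega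
    -- construct X' = τ_{≥ 1-d}(X⟦1⟧)
    obtain ⟨A, B, hA, hB, u, v, w, hTri⟩ :=
      t.exists_triangle (X⟦(1:ℤ)⟧) (-(d:ℤ)) (1 - (d:ℤ)) (by omega)
    -- B ∈ extHeart
    have hBle : t.le 0 B := by
      have := le_ext t _ (rot_of_distTriang _ hTri) 0
        (t.le_monotone (by omega : (-1:ℤ) ≤ 0) _ (t.le_shift 0 1 (-1) (by omega) X hX.1.1))
        (t.le_monotone (by omega : -(d:ℤ) - 1 ≤ 0) _
          (t.le_shift (-(d:ℤ)) 1 (-(d:ℤ) - 1) (by omega) A hA))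
      exact this
    -- B ∈ T
    have hBT : B ∈ lPerpLe0 t d 𝒴 := by
      refine ⟨⟨hBle, hB⟩, fun Y' hY' m hm g => ?_⟩
      obtain ⟨e, he⟩ := Triangle.yoneda_exact₂ _ (rot_of_distTriang _ hTri) g
        (by rw [show (Triangle.mk u v w).rotate.mor₁ = v from rfl]
            exact shift_hom_zero (fun m' => m' ≤ 0)
              (fun m' hm' g' => hX.2 Y' hY' m' hm' g') (by omega : m - 1 ≤ 0) (v ≫ g))
      have hYm : t.ge (1 - (d:ℤ) - m) (Y'⟦m⟧) :=
        t.ge_shift (1 - (d:ℤ)) m (1 - d - m) (by omega) Y' (h𝒴 hY').2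
      have he0 : e = 0 :=
        tzero t (by omega : -(d:ℤ) - 1 < 1 - d - m)
          (t.le_shift (-(d:ℤ)) 1 (-(d:ℤ) - 1) (by omega) A hA) hYm e
      rw [he, he0]; exact comp_zero
    -- shift f by one
    have hf1 : (shiftFunctor C (1:ℤ)).map f ≫ (shiftFunctorAdd' C j 1 (j+1) rfl).inv.app Y = 0 := by
      obtain ⟨g, hg⟩ := Triangle.yoneda_exact₂ _ hTri
        ((shiftFunctor C (1:ℤ)).map f ≫ (shiftFunctorAdd' C j 1 (j+1) rfl).inv.app Y)
        (by rw [show (Triangle.mk u v w).mor₁ = u from rfl]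
            exact tzero t (by omega : -(d:ℤ) < 1 - d - (j+1))
              hA (t.ge_shift (1 - (d:ℤ)) (j+1) (1 - d - (j+1)) (by omega) Y (hY.1).2) _)
      refine hg.trans ?_; rw [ih (j+1) (by omega) (by omega) B hBT Y hY g]; exact comp_zero
    apply (shiftFunctor C (1:ℤ)).map_injective
    rw [Functor.map_zero]
    have := congrArg (fun q => q ≫ (shiftFunctorAdd' C j 1 (j+1) rfl).hom.app Y) hf1
    simpa using this

lemma dfac_closed (t : TStructure C) (d : ℕ) (hd : 1 ≤ d) (𝒴 : Set C)
    (h𝒴 : 𝒴 ⊆ extHeart t d) :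
    ∀ Z : C, IsDFactor t d (lPerpLe0 t d 𝒴) Z → Z ∈ lPerpLe0 t d 𝒴 := by
  rintro Z ⟨hZh, Zc, Xc, hZ0, hch⟩
  subst hZ0
  refine ⟨hZh, fun Y hY j hj f => ?_⟩
  have claim : ∀ (k i : ℕ), i ≤ d → d ≤ i + k →
      ∀ (m : ℤ), m ≤ -(i:ℤ) → ∀ g : Zc i ⟶ Y⟦m⟧, g = 0 := by
    intro k
    induction k with
    | zero =>
      intro i hid hdi m hm g
      have hZd : Zc i ∈ extHeart t d := (hch i (by omega) hid).1
      exact tzero t (by omega : (0:ℤ) < 1 - (d:ℤ) - m) hZd.1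
        (t.ge_shift (1 - (d:ℤ)) m (1 - d - m) (by omega) Y (h𝒴 hY).2) g
    | succ k ih =>
      intro i hid hdi m hm g
      by_cases hk : d ≤ i + k
      · exact ih i hid hk m hm g
      have hi1 : i + 1 ≤ d := by omega
      obtain ⟨hZi, hXi, u, v, w, hTri⟩ := hch (i + 1) (by omega) hi1
      obtain ⟨e, he⟩ := Triangle.yoneda_exact₃ _ hTri g
        (by rw [show (Triangle.mk u v w).mor₂ = v from rfl]
            exact hXi.2 Y hY m (by omega) (v ≫ g))
      have he0 : e = 0 :=
        shift_hom_zero (fun m' => m' ≤ -((i:ℤ)+1))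
          (fun m' hm' g' => ih (i+1) hi1 (by omega) m' (by push_cast; omega) g')
          (by omega : m - 1 ≤ -((i:ℤ)+1)) e
      rw [he, he0]; exact comp_zero
  exact claim d 0 (by omega) (by omega) j (by omega) f

/-- **(Proposition, `^{⊥_{≤0}}𝒴` is a positive torsion class.)** For any subcategory
`𝒴` of `D^{[-d+1,0]}`, the subcategory `^{⊥_{≤0}}𝒴` is a positive torsion class: it is
a torsion class in `D^{[-d+1,0]}`, it is closed under `d`-factors, and
`Hom(T, F[j]) = 0` for all `j ≤ 0` where `T = ^{⊥_{≤0}}𝒴` and `F = T^⊥`. -/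
theorem lPerpLe0_is_positive_torsion_class (t : TStructure C) (hb : IsBoundedTStr t)
    (d : ℕ) (hd : 1 ≤ d) (𝒴 : Set C) (h𝒴 : 𝒴 ⊆ extHeart t d) :
    IsPositiveTorsionPair t d (lPerpLe0 t d 𝒴) (rPerp t d (lPerpLe0 t d 𝒴)) ∧
    ClosedUnderDFactors t d (lPerpLe0 t d 𝒴) := by
  refine ⟨⟨⟨fun Z hZ => hZ.1, fun Z hZ => hZ.1, ?_, rfl⟩, ?_⟩, dfac_closed t d hd 𝒴 h𝒴⟩
  · apply Set.Subset.antisymm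
    · intro Z hZ
      exact ⟨hZ.1, fun Y hY f => hY.2 Z hZ f⟩
    · exact lperp_subset t d 𝒴 h𝒴
  · intro X hX Y hY j hj f
    obtain ⟨n, rfl⟩ : ∃ n : ℕ, j = -(n:ℤ) := ⟨(-j).toNat, by omega⟩
    exact pos_vanish t d 𝒴 h𝒴 n _ le_rfl (by omega) X hX Y hY f
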